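/- In the group algebra of the symmetric group S_{n+1} over the integers, the sum of all group elements equals the product w_{1,1} w_{1,2} ⋯ w_{1,n}, where w_{1,j} := 1 + s_{j,j} + s_{j-1,j} + ⋯ + s_{1,j}, with s_{i,j} := r_j r_{j-1} ⋯ r_i and r_k the adjacent transposition swapping k and k+1. -/

import Mathlib

/-- The adjacent transposition `r_k` swapping letters `k` and `k+1` (1-indexed),
i.e. the 0-indexed positions `k-1` and `k` of `Fin (n+1)`. -/
def adjSwap (n k : ℕ) : Equiv.Perm (Fin (n + 1)) :=
  Equiv.swap (Fin.ofNat (n + 1) (k - 1 : ℕ)) (Fin.ofNat (n + 1) (k : ℕ))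

/-- `s_{i,j} := r_j r_{j-1} ⋯ r_i` (with `r_i` acting first). -/
def sPerm (n i j : ℕ) : Equiv.Perm (Fin (n + 1)) :=
  ((List.range' i (j + 1 - i)).map (adjSwap n)).foldl (fun g h => h * g) 1

/-- `w_{i,j} := 1 + Σ_{k=i}^{j} s_{k,j}` in the group algebra `ℤ[S_{n+1}]`. -/
noncomputable def wElt (n i j : ℕ) : MonoidAlgebra ℤ (Equiv.Perm (Fin (n + 1))) :=
  1 + ∑ k ∈ Finset.Icc i j, MonoidAlgebra.of ℤ (Equiv.Perm (Fin (n + 1))) (sPerm n k j)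

lemma sPerm_nil (n i j : ℕ) (h : j < i) : sPerm n i j = 1 := by
  unfold sPerm
  have : j + 1 - i = 0 := by omega
  simp [this]

lemma sPerm_succ (n i j : ℕ) (h : i ≤ j + 1) :
    sPerm n i (j + 1) = adjSwap n (j + 1) * sPerm n i j := by
  unfold sPerm
  have h1 : j + 1 + 1 - i = (j + 1 - i) + 1 := by omega
  have h2 : i + 1 * (j + 1 - i) = j + 1 := by omega
  rw [h1, List.range'_concat, List.map_append, List.foldl_append, h2]
  simp

lemma natCast_fin (n a : ℕ) (h : a ≤ n) : Fin.ofNat (n + 1) a = ⟨a, by omega⟩ := by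
  apply Fin.ext
  simp only [Fin.val_ofNat]
  exact Nat.mod_eq_of_lt (by omega)

lemma adjSwap_succ (n m : ℕ) (h : m < n) :
    adjSwap n (m + 1) = Equiv.swap ⟨m, by omega⟩ ⟨m + 1, by omega⟩ := by
  unfold adjSwap
  rw [show m + 1 - 1 = m from rfl, natCast_fin n m (by omega), natCast_fin n (m+1) (by omega)]

lemma sPerm_spec (n i m : ℕ) (him : i ≤ m) (hm : m ≤ n) :
    (sPerm n (i + 1) m) ⟨i, by omega⟩ = ⟨m, by omega⟩ ∧
      ∀ x : Fin (n + 1), m < (x : ℕ) → sPerm n (i + 1) m x = x := by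
  induction m with
  | zero =>
    have : i = 0 := by omega
    subst this
    rw [sPerm_nil n 1 0 (by omega)]
    exact ⟨rfl, fun x _ => rfl⟩
  | succ m ih =>
    rcases Nat.lt_or_ge i (m + 1) with hi | hi
    · have him' : i ≤ m := by omega
      obtain ⟨h1, h2⟩ := ih him' (by omega)
      rw [sPerm_succ n (i + 1) m (by omega), adjSwap_succ n m (by omega)]
      constructor
      · simp only [Equiv.Perm.mul_apply, h1, Equiv.swap_apply_left]
      · intro x hx
        have hx' : m < (x : ℕ) := by omega
        simp only [Equiv.Perm.mul_apply, h2 x hx']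
        apply Equiv.swap_apply_of_ne_of_ne <;>
          (intro hc; apply_fun Fin.val at hc; simp at hc; omega)
    · have : i = m + 1 := by omega
      subst this
      rw [sPerm_nil n (m + 2) (m + 1) (by omega)]
      exact ⟨rfl, fun x _ => rfl⟩

noncomputable abbrev ofP (n : ℕ) :
    Equiv.Perm (Fin (n+1)) →* MonoidAlgebra ℤ (Equiv.Perm (Fin (n + 1))) :=
  MonoidAlgebra.of ℤ (Equiv.Perm (Fin (n + 1)))

def Hset (n m : ℕ) : Finset (Equiv.Perm (Fin (n + 1))) :=
  Finset.univ.filter (fun g => ∀ x : Fin (n + 1), m ≤ (x : ℕ) → g x = x)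

lemma mem_Hset {n m : ℕ} {g : Equiv.Perm (Fin (n + 1))} :
    g ∈ Hset n m ↔ ∀ x : Fin (n + 1), m ≤ (x : ℕ) → g x = x := by
  simp [Hset]

lemma Hset_one (n : ℕ) : Hset n 1 = {1} := by
  ext g
  simp only [mem_Hset, Finset.mem_singleton]
  constructor
  · intro h
    ext x
    rcases Nat.eq_zero_or_pos (x : ℕ) with hx | hx
    · by_contra hc
      have hne : g x ≠ x := fun he => hc (by rw [he]; rfl)
      have hge : 1 ≤ ((g x : Fin (n+1)) : ℕ) := by
        rcases Nat.eq_zero_or_pos ((g x : Fin (n+1)) : ℕ) with h0 | h0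
        · exact absurd (Fin.ext (h0.trans hx.symm) : g x = x) hne
        · exact h0
      have := h (g x) hge
      exact hne (g.injective this)
    · simp [h x hx]
  · rintro rfl x _; rfl

lemma Hset_top (n : ℕ) : Hset n (n + 1) = Finset.univ := by
  ext g
  simp only [mem_Hset, Finset.mem_univ, iff_true]
  intro x hx
  exact absurd x.isLt (by omega)

lemma wElt_eq_sum (n m : ℕ) (hm : 1 ≤ m) :
    wElt n 1 m = ∑ i ∈ Finset.range (m + 1), ofP n (sPerm n (i + 1) m) := by
  rw [Finset.sum_range_succ, sPerm_nil n (m + 1) m (by omega), map_one]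
  unfold wElt
  have hs : (∑ k ∈ Finset.Icc 1 m, (MonoidAlgebra.of ℤ (Equiv.Perm (Fin (n + 1)))) (sPerm n k m))
      = ∑ i ∈ Finset.range m, ofP n (sPerm n (i + 1) m) := by
    rw [← Finset.Ico_add_one_right_eq_Icc, Finset.sum_Ico_eq_sum_range]
    exact Finset.sum_congr rfl (fun i _ => by rw [Nat.add_comm 1 i])
  rw [hs]
  exact add_comm _ _

section Step
variable {n m : ℕ}

lemma sPerm_inv_apply (hi : i ≤ m) (hm : m ≤ n) :
    (sPerm n (i + 1) m)⁻¹ ⟨m, by omega⟩ = ⟨i, by omega⟩ := by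
  rw [← (sPerm_spec n i m hi hm).1]
  simp

lemma sPerm_inv_fixes (hi : i ≤ m) (hm : m ≤ n) (x : Fin (n+1)) (hx : m < (x : ℕ)) :
    (sPerm n (i + 1) m)⁻¹ x = x := by
  conv_lhs => rw [← (sPerm_spec n i m hi hm).2 x hx]
  simp

lemma mul_mem_Hsucc (hm : m ≤ n) {g : Equiv.Perm (Fin (n+1))} (hg : g ∈ Hset n m)
    {i : ℕ} (hi : i ≤ m) : g * sPerm n (i + 1) m ∈ Hset n (m + 1) := by
  rw [mem_Hset] at hg ⊢
  intro x hx
  simp only [Equiv.Perm.mul_apply, (sPerm_spec n i m hi hm).2 x (by omega)]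
  exact hg x (by omega)

lemma idx_eq (hm : m ≤ n) {g : Equiv.Perm (Fin (n+1))} (hg : g ∈ Hset n m)
    {i : ℕ} (hi : i ≤ m) :
    ((g * sPerm n (i + 1) m)⁻¹ ⟨m, by omega⟩ : Fin (n+1)) = ⟨i, by omega⟩ := by
  rw [mem_Hset] at hg
  have hkey : (g * sPerm n (i + 1) m) ⟨i, by omega⟩ = ⟨m, by omega⟩ := by
    simp only [Equiv.Perm.mul_apply, (sPerm_spec n i m hi hm).1]
    exact hg ⟨m, by omega⟩ le_rfl
  rw [Equiv.Perm.inv_def, Equiv.symm_apply_eq]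
  exact hkey.symm

lemma idx_le (hm : m ≤ n) {h : Equiv.Perm (Fin (n+1))} (hh : h ∈ Hset n (m + 1)) :
    ((h⁻¹ ⟨m, by omega⟩ : Fin (n+1)) : ℕ) ≤ m := by
  rw [mem_Hset] at hh
  by_contra hc
  have h2 : h (h⁻¹ ⟨m, by omega⟩) = h⁻¹ ⟨m, by omega⟩ := hh _ (by omega)
  rw [show h (h⁻¹ ⟨m, by omega⟩) = ⟨m, by omega⟩ from (Equiv.eq_symm_apply h).mp rfl] at h2
  have h3 : m = ((h⁻¹ ⟨m, by omega⟩ : Fin (n+1)) : ℕ) := congrArg Fin.val h2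
  omega

lemma back_mem (hm : m ≤ n) {h : Equiv.Perm (Fin (n+1))} (hh : h ∈ Hset n (m + 1)) :
    h * (sPerm n (((h⁻¹ ⟨m, by omega⟩ : Fin (n+1)) : ℕ) + 1) m)⁻¹ ∈ Hset n m := by
  have hle := idx_le hm hh
  rw [mem_Hset] at hh ⊢
  intro x hx
  rcases eq_or_lt_of_le hx with he | hlt
  · have hxm : x = ⟨m, by omega⟩ := Fin.ext he.symm
    rw [hxm]
    simp only [Equiv.Perm.mul_apply, sPerm_inv_apply hle hm]
    have h2 : (⟨((h⁻¹ ⟨m, by omega⟩ : Fin (n+1)) : ℕ), by omega⟩ : Fin (n+1)) =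
        h⁻¹ ⟨m, by omega⟩ := Fin.ext rfl
    rw [h2]
    exact (Equiv.eq_symm_apply h).mp rfl
  · simp only [Equiv.Perm.mul_apply, sPerm_inv_fixes hle hm x hlt]
    exact hh x (by omega)

lemma step (h1 : 1 ≤ m) (hm : m ≤ n) :
    (∑ g ∈ Hset n (m + 1), ofP n g) = (∑ g ∈ Hset n m, ofP n g) * wElt n 1 m := by
  rw [wElt_eq_sum n m h1, Finset.sum_mul_sum]
  simp only [← map_mul]
  rw [← Finset.sum_product']
  symm
  refine Finset.sum_bij' (fun p _ => p.1 * sPerm n (p.2 + 1) m)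
    (fun h _ => (h * (sPerm n (((h⁻¹ ⟨m, by omega⟩ : Fin (n+1)) : ℕ) + 1) m)⁻¹,
      ((h⁻¹ ⟨m, by omega⟩ : Fin (n+1)) : ℕ)))
    ?_ ?_ ?_ ?_ ?_
  · rintro ⟨g, i⟩ hp
    rw [Finset.mem_product, Finset.mem_range] at hp
    exact mul_mem_Hsucc hm hp.1 (by omega)
  · intro h hh
    rw [Finset.mem_product, Finset.mem_range]
    exact ⟨back_mem hm hh, by have := idx_le hm hh; omega⟩
  · rintro ⟨g, i⟩ hp
    rw [Finset.mem_product, Finset.mem_range] at hp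
    obtain ⟨hg, hi⟩ := hp
    dsimp only
    have hk := idx_eq hm hg (i := i) (by omega)
    dsimp only at hk
    rw [hk]
    simp
  · intro h hh
    dsimp only
    simp
  · rintro ⟨g, i⟩ hp
    rfl

end Step


/-- In the group algebra `ℤ[S_{n+1}]`, the sum of all group elements equals the
product `w_{1,1} w_{1,2} ⋯ w_{1,n}`. -/
theorem sum_perm_eq_prod_wElt (n : ℕ) (hn : 1 ≤ n) :
    (∑ g : Equiv.Perm (Fin (n + 1)),
        MonoidAlgebra.of ℤ (Equiv.Perm (Fin (n + 1))) g) =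
      ((List.range' 1 n).map (fun j => wElt n 1 j)).prod := by
  have main : ∀ m, m ≤ n → (∑ g ∈ Hset n (m + 1), ofP n g) =
      ((List.range' 1 m).map (fun j => wElt n 1 j)).prod := by
    intro m
    induction m with
    | zero => intro _; simp [Hset_one, MonoidAlgebra.one_def]
    | succ m ih =>
      intro hm
      rw [step (by omega) hm, ih (by omega), List.range'_concat]
      simp only [List.map_append, List.prod_append, List.map_cons, List.map_nil,
        List.prod_cons, List.prod_nil, mul_one, one_mul]
      rw [Nat.add_comm 1 m]
  have := main n le_rfl
  rw [Hset_top] at this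
  exact this
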